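/- arXiv:0807.2598 — 4 statements merged into one kernel-verified Lean document; each statement's English description precedes it below -/
import Mathlib

section
/- Let p ≥ 2 and let ψ ∈ O_p satisfy |ψ₁₁| < 1. Then there exist orthogonal matrices h₁, k₁ ∈ O_{p−1} such that diag(1, h₁) · ψ · diag(1, k₁)ᵀ = ψ₀(ψ₁₁), where ψ₀(γ) is the p×p matrix [[γ, √(1−γ²)·ε₁ᵀ],[√(1−γ²)·ε₁, diag(−γ, I_{p−2})]] and ε₁ = (1,0,…,0)ᵀ ∈ ℝ^{p−1}. -/
open MeasureTheory Matrix

/-- The (Borel = product) σ-algebra on real matrices. -/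
instance matMeas (m n : ℕ) : MeasurableSpace (Matrix (Fin m) (Fin n) ℝ) := MeasurableSpace.pi

/-- `μ` is the Haar probability distribution on the orthogonal group `O_p`, viewed as a Borel
probability measure on the space of `p × p` real matrices which is concentrated on the set of
orthogonal matrices and invariant under left and right translation by orthogonal matrices. -/
def IsHaarOrthogonal (p : ℕ) (μ : Measure (Matrix (Fin p) (Fin p) ℝ)) : Prop :=
  IsProbabilityMeasure μ ∧
  μ {A | A ∈ Matrix.orthogonalGroup (Fin p) ℝ} = 1 ∧
  (∀ g ∈ Matrix.orthogonalGroup (Fin p) ℝ, Measure.map (fun A => g * A) μ = μ) ∧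
  (∀ g ∈ Matrix.orthogonalGroup (Fin p) ℝ, Measure.map (fun A => A * g) μ = μ)

/-- The density `f(x|p) = Γ(p/2)/(Γ(1/2)Γ((p-1)/2)) (1-x²)^((p-3)/2)` on `(-1,1)`,
extended by `0` outside `(-1,1)`. -/
noncomputable def haarEntryDensity (p : ℕ) (x : ℝ) : ENNReal :=
  ENNReal.ofReal (if x ∈ Set.Ioo (-1 : ℝ) 1 then
    (Real.Gamma ((p : ℝ) / 2) / (Real.Gamma (1 / 2) * Real.Gamma (((p : ℝ) - 1) / 2))) *
      (1 - x ^ 2) ^ (((p : ℝ) - 3) / 2)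
  else 0)

/-- `ν` is the uniform distribution on the unit sphere `S^{k-1} ⊆ ℝ^k`, viewed as the unique
rotation-invariant Borel probability measure on `ℝ^k` concentrated on the unit sphere. -/
def IsUniformOnSphere (k : ℕ) (ν : Measure (EuclideanSpace ℝ (Fin k))) : Prop :=
  IsProbabilityMeasure ν ∧ ν {u | ‖u‖ = 1} = 1 ∧
  ∀ L : EuclideanSpace ℝ (Fin k) ≃ₗᵢ[ℝ] EuclideanSpace ℝ (Fin k), Measure.map L ν = ν

/-- The `(n+1) × (n+1)` block-diagonal matrix `diag(γ, Δ)` with scalar block `γ` and lower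
block `Δ`. -/
def cornerBlock {n : ℕ} (γ : ℝ) (Δ : Matrix (Fin n) (Fin n) ℝ) :
    Matrix (Fin (n + 1)) (Fin (n + 1)) ℝ :=
  Matrix.of fun i j =>
    if hi : i = 0 then (if j = 0 then γ else 0)
    else if hj : j = 0 then 0
    else Δ (i.pred hi) (j.pred hj)

/-- The matrix `ψ₀(γ)`: the `p × p` orthogonal matrix whose first row and first column both
equal `(γ, √(1-γ²), 0, …, 0)` and whose lower-right `(p-1) × (p-1)` block is
`diag(-γ, I_{p-2})` (here `p = n+2`). -/
noncomputable def psi0 (n : ℕ) (γ : ℝ) : Matrix (Fin (n + 2)) (Fin (n + 2)) ℝ :=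
  Matrix.of fun i j =>
    if i = 0 then (if j = 0 then γ else if j = 1 then Real.sqrt (1 - γ ^ 2) else 0)
    else if i = 1 then (if j = 0 then Real.sqrt (1 - γ ^ 2) else if j = 1 then -γ else 0)
    else if i = j then 1 else 0

/-- The reflection (Householder) matrix `I - 2 w wᵀ / (wᵀ w)`. -/
noncomputable def reflMatrix (p : ℕ) (w : Fin p → ℝ) : Matrix (Fin p) (Fin p) ℝ :=
  1 - (2 / (w ⬝ᵥ w)) • Matrix.vecMulVec w w

section CB
variable {n : ℕ}

@[simp] lemma cb00 (γ : ℝ) (Δ : Matrix (Fin n) (Fin n) ℝ) : cornerBlock γ Δ 0 0 = γ := by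
  simp [cornerBlock]

@[simp] lemma cb0s (γ : ℝ) (Δ : Matrix (Fin n) (Fin n) ℝ) (j : Fin n) :
    cornerBlock γ Δ 0 j.succ = 0 := by
  simp [cornerBlock, (Fin.succ_ne_zero j)]

@[simp] lemma cbs0 (γ : ℝ) (Δ : Matrix (Fin n) (Fin n) ℝ) (i : Fin n) :
    cornerBlock γ Δ i.succ 0 = 0 := by
  simp [cornerBlock, (Fin.succ_ne_zero i)]

@[simp] lemma cbss (γ : ℝ) (Δ : Matrix (Fin n) (Fin n) ℝ) (i j : Fin n) :
    cornerBlock γ Δ i.succ j.succ = Δ i j := by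
  simp [cornerBlock, (Fin.succ_ne_zero i), (Fin.succ_ne_zero j)]

lemma cornerBlock_transpose (γ : ℝ) (Δ : Matrix (Fin n) (Fin n) ℝ) :
    (cornerBlock γ Δ)ᵀ = cornerBlock γ Δᵀ := by
  ext i j
  induction i using Fin.cases <;> induction j using Fin.cases <;> simp

lemma cornerBlock_mul (γ δ : ℝ) (A B : Matrix (Fin n) (Fin n) ℝ) :
    cornerBlock γ A * cornerBlock δ B = cornerBlock (γ * δ) (A * B) := by
  ext i j
  rw [mul_apply, Fin.sum_univ_succ]
  induction i using Fin.cases <;> induction j using Fin.cases <;>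
    simp [mul_apply]

lemma cornerBlock_one : cornerBlock (n := n) 1 1 = 1 := by
  ext i j
  induction i using Fin.cases <;> induction j using Fin.cases <;>
    simp [one_apply, Fin.succ_ne_zero, (Fin.succ_ne_zero _).symm, Fin.succ_inj]

lemma cornerBlock_mem {h : Matrix (Fin n) (Fin n) ℝ}
    (hh : h ∈ Matrix.orthogonalGroup (Fin n) ℝ) :
    cornerBlock 1 h ∈ Matrix.orthogonalGroup (Fin (n + 1)) ℝ := by
  rw [Matrix.mem_orthogonalGroup_iff] at hh ⊢
  show cornerBlock 1 h * (cornerBlock 1 h)ᵀ = 1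
  rw [cornerBlock_transpose, cornerBlock_mul, one_mul]
  rw [show h * hᵀ = 1 from hh]
  exact cornerBlock_one

lemma mulcb_left_zero (H : Matrix (Fin (n + 1)) (Fin (n + 1)) ℝ)
    (M : Matrix (Fin (n + 2)) (Fin (n + 2)) ℝ) (j : Fin (n + 2)) :
    (cornerBlock 1 H * M) 0 j = M 0 j := by
  rw [mul_apply, Fin.sum_univ_succ]; simp

lemma mulcb_left_succ (H : Matrix (Fin (n + 1)) (Fin (n + 1)) ℝ)
    (M : Matrix (Fin (n + 2)) (Fin (n + 2)) ℝ) (i : Fin (n + 1)) (j : Fin (n + 2)) :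
    (cornerBlock 1 H * M) i.succ j = ∑ k, H i k * M k.succ j := by
  rw [mul_apply, Fin.sum_univ_succ]; simp

lemma mulcb_right_zero (K : Matrix (Fin (n + 1)) (Fin (n + 1)) ℝ)
    (M : Matrix (Fin (n + 2)) (Fin (n + 2)) ℝ) (i : Fin (n + 2)) :
    (M * (cornerBlock 1 K)ᵀ) i 0 = M i 0 := by
  rw [mul_apply, Fin.sum_univ_succ]; simp

lemma mulcb_right_succ (K : Matrix (Fin (n + 1)) (Fin (n + 1)) ℝ)
    (M : Matrix (Fin (n + 2)) (Fin (n + 2)) ℝ) (i : Fin (n + 2)) (j : Fin (n + 1)) :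
    (M * (cornerBlock 1 K)ᵀ) i j.succ = ∑ k, M i k.succ * K j k := by
  rw [mul_apply, Fin.sum_univ_succ]; simp

lemma ss_ne_zero (k : Fin n) : (k.succ.succ : Fin (n + 2)) ≠ 0 := Fin.succ_ne_zero _

lemma ss_ne_one (k : Fin n) : (k.succ.succ : Fin (n + 2)) ≠ 1 := by
  rw [← Fin.succ_zero_eq_one, Ne, Fin.succ_inj]
  exact Fin.succ_ne_zero _

end CB


section House
variable {p : ℕ}

lemma vmv_mul_vmv (w : Fin p → ℝ) :
    vecMulVec w w * vecMulVec w w = (w ⬝ᵥ w) • vecMulVec w w := by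
  ext i j
  rw [mul_apply]
  simp only [vecMulVec_apply, Matrix.smul_apply, smul_eq_mul, dotProduct, Finset.sum_mul]
  exact Finset.sum_congr rfl fun k _ => by ring

lemma vmv_mulVec (w x : Fin p → ℝ) :
    vecMulVec w w *ᵥ x = (w ⬝ᵥ x) • w := by
  ext i
  simp only [mulVec, dotProduct, vecMulVec_apply, Pi.smul_apply, smul_eq_mul, Finset.sum_mul]
  exact Finset.sum_congr rfl fun k _ => by ring

lemma reflMatrix_transpose (w : Fin p → ℝ) : (reflMatrix p w)ᵀ = reflMatrix p w := by
  unfold reflMatrix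
  rw [transpose_sub, transpose_smul, transpose_one]
  congr 1
  ext i j
  simp [vecMulVec_apply, mul_comm]

lemma reflMatrix_mem (w : Fin p → ℝ) (hw : w ⬝ᵥ w ≠ 0) :
    reflMatrix p w ∈ Matrix.orthogonalGroup (Fin p) ℝ := by
  rw [Matrix.mem_orthogonalGroup_iff]
  show reflMatrix p w * (reflMatrix p w)ᵀ = 1
  rw [reflMatrix_transpose]
  unfold reflMatrix
  set c := 2 / (w ⬝ᵥ w) with hc
  set W := vecMulVec w w with hW
  have h1 : (1 - c • W) * (1 - c • W) = 1 - c • W - c • W + (c * c) • (W * W) := by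
    rw [sub_mul, mul_sub, mul_sub, smul_mul_smul_comm]
    simp only [mul_one, one_mul]
    abel
  rw [h1, vmv_mul_vmv, smul_smul]
  have h2 : c * c * (w ⬝ᵥ w) = c + c := by
    rw [hc]; field_simp; ring
  rw [h2, add_smul]
  abel

lemma reflMatrix_mulVec (w x : Fin p → ℝ) :
    reflMatrix p w *ᵥ x = x - ((2 / (w ⬝ᵥ w)) * (w ⬝ᵥ x)) • w := by
  unfold reflMatrix
  rw [sub_mulVec, one_mulVec, smul_mulVec, vmv_mulVec, smul_smul]

lemma exists_orth_mulVec (v : Fin (p + 1) → ℝ) :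
    ∃ H ∈ Matrix.orthogonalGroup (Fin (p + 1)) ℝ,
      H *ᵥ v = Real.sqrt (v ⬝ᵥ v) • (Pi.single 0 1 : Fin (p + 1) → ℝ) := by
  set s := Real.sqrt (v ⬝ᵥ v) with hs
  have hvv : v ⬝ᵥ v = s ^ 2 := by
    rw [hs, Real.sq_sqrt]
    exact Finset.sum_nonneg fun i _ => mul_self_nonneg _
  by_cases hv : v = s • (Pi.single 0 1 : Fin (p + 1) → ℝ)
  · exact ⟨1, one_mem _, by rw [one_mulVec, ← hv]⟩
  · set w := v - s • (Pi.single 0 1 : Fin (p + 1) → ℝ) with hwdef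
    have hw0 : w ≠ 0 := sub_ne_zero.mpr hv
    have hww : w ⬝ᵥ w ≠ 0 := fun h => hw0 (dotProduct_self_eq_zero.mp h)
    have hsingle : (Pi.single 0 1 : Fin (p + 1) → ℝ) ⬝ᵥ (Pi.single 0 1) = 1 := by
      simp
    have h1 : (Pi.single 0 1 : Fin (p + 1) → ℝ) ⬝ᵥ v = 1 * v 0 := single_dotProduct v 1 0
    have h2 : v ⬝ᵥ (Pi.single 0 1 : Fin (p + 1) → ℝ) = v 0 * 1 := dotProduct_single v 1 0
    have hdv : w ⬝ᵥ v = s ^ 2 - s * v 0 := by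
      rw [hwdef]
      simp only [sub_dotProduct, smul_dotProduct, hvv, h1, smul_eq_mul]
      ring
    have hdw : w ⬝ᵥ w = 2 * (s ^ 2 - s * v 0) := by
      rw [hwdef]
      simp only [sub_dotProduct, dotProduct_sub, smul_dotProduct, dotProduct_smul, hvv, h1, h2,
        hsingle, smul_eq_mul]
      ring
    refine ⟨reflMatrix _ w, reflMatrix_mem w hww, ?_⟩
    rw [reflMatrix_mulVec, hdv, hdw]
    have hne : s ^ 2 - s * v 0 ≠ 0 := by
      intro h; rw [h, mul_zero] at hdw; exact hww hdw
    rw [show 2 / (2 * (s ^ 2 - s * v 0)) * (s ^ 2 - s * v 0) = 1 by field_simp; exact div_self (by rw [mul_sub, ← sq]; exact hne)]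
    rw [one_smul, hwdef]
    abel

end House
/-- Proposition 2.1.  Let `p = n+2 ≥ 2` and let `ψ ∈ O_p` with `|ψ₁₁| < 1`.
Then there exist `h₁, k₁ ∈ O_{p-1}` with `diag(1,h₁) · ψ · diag(1,k₁)ᵀ = ψ₀(ψ₁₁)`. -/
theorem exists_reduction_to_cross_section (n : ℕ)
    (ψ : Matrix (Fin (n + 2)) (Fin (n + 2)) ℝ)
    (hψ : ψ ∈ Matrix.orthogonalGroup (Fin (n + 2)) ℝ) (h11 : |ψ 0 0| < 1) :
    ∃ h₁ k₁ : Matrix (Fin (n + 1)) (Fin (n + 1)) ℝ,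
      h₁ ∈ Matrix.orthogonalGroup (Fin (n + 1)) ℝ ∧
      k₁ ∈ Matrix.orthogonalGroup (Fin (n + 1)) ℝ ∧
      cornerBlock 1 h₁ * ψ * (cornerBlock 1 k₁)ᵀ = psi0 n (ψ 0 0) := by
  set γ : ℝ := ψ 0 0 with hγ
  set s : ℝ := Real.sqrt (1 - γ ^ 2) with hsdef
  have hγ2 : 1 - γ ^ 2 > 0 := by
    obtain ⟨h1, h2⟩ := abs_lt.mp h11
    nlinarith
  have hs2 : s ^ 2 = 1 - γ ^ 2 := Real.sq_sqrt hγ2.le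
  have hs0 : 0 < s := Real.sqrt_pos.mpr hγ2
  have hLψ : ψᵀ * ψ = 1 := (Matrix.mem_orthogonalGroup_iff' (Fin (n+2)) ℝ).mp hψ
  have hRψ : ψ * ψᵀ = 1 := (Matrix.mem_orthogonalGroup_iff (Fin (n+2)) ℝ).mp hψ
  set v : Fin (n + 1) → ℝ := fun i => ψ i.succ 0 with hvdef
  set u : Fin (n + 1) → ℝ := fun j => ψ 0 j.succ with hudef
  -- norms of first column/row tails
  have hvv : v ⬝ᵥ v = 1 - γ ^ 2 := by
    have h00 : (ψᵀ * ψ) 0 0 = 1 := by rw [hLψ]; simp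
    rw [mul_apply, Fin.sum_univ_succ] at h00
    simp only [transpose_apply] at h00
    have : v ⬝ᵥ v = ∑ i : Fin (n + 1), ψ i.succ 0 * ψ i.succ 0 := rfl
    rw [this]
    nlinarith [h00]
  have huu : u ⬝ᵥ u = 1 - γ ^ 2 := by
    have h00 : (ψ * ψᵀ) 0 0 = 1 := by rw [hRψ]; simp
    rw [mul_apply, Fin.sum_univ_succ] at h00
    simp only [transpose_apply] at h00
    have : u ⬝ᵥ u = ∑ j : Fin (n + 1), ψ 0 j.succ * ψ 0 j.succ := rfl
    rw [this]
    nlinarith [h00]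
  obtain ⟨H, hH, hHv⟩ := exists_orth_mulVec v
  obtain ⟨K, hK, hKu⟩ := exists_orth_mulVec u
  rw [hvv, ← hsdef] at hHv
  rw [huu, ← hsdef] at hKu
  set ψ' : Matrix (Fin (n + 2)) (Fin (n + 2)) ℝ :=
    cornerBlock 1 H * ψ * (cornerBlock 1 K)ᵀ with hψ'def
  have hψ'mem : ψ' ∈ Matrix.orthogonalGroup (Fin (n + 2)) ℝ := by
    exact mul_mem (mul_mem (cornerBlock_mem hH) hψ)
      (show (cornerBlock 1 K)ᵀ ∈ _ from Unitary.star_mem (cornerBlock_mem hK))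
  have hL' : ψ'ᵀ * ψ' = 1 := (Matrix.mem_orthogonalGroup_iff' (Fin (n+2)) ℝ).mp hψ'mem
  have hR' : ψ' * ψ'ᵀ = 1 := (Matrix.mem_orthogonalGroup_iff (Fin (n+2)) ℝ).mp hψ'mem
  -- entries of first column and row of ψ'
  have hc0 : ∀ i : Fin (n + 2), ψ' i 0 = if i = 0 then γ else if i = 1 then s else 0 := by
    intro i
    rw [hψ'def, mulcb_right_zero]
    induction i using Fin.cases with
    | zero => rw [mulcb_left_zero]; simp [hγ]
    | succ i =>
      rw [mulcb_left_succ]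
      have : ∑ k, H i k * ψ k.succ 0 = (H *ᵥ v) i := rfl
      rw [this, hHv]
      simp only [Pi.smul_apply, Pi.single_apply, smul_eq_mul]
      rcases eq_or_ne i 0 with h | h
      · subst h
        simp [Fin.succ_ne_zero, Fin.succ_zero_eq_one]
      · have hne1 : i.succ ≠ 1 := by
          rw [← Fin.succ_zero_eq_one]; exact Fin.succ_inj.ne.mpr h
        simp [h, Fin.succ_ne_zero, hne1]
  have hr0 : ∀ j : Fin (n + 2), ψ' 0 j = if j = 0 then γ else if j = 1 then s else 0 := by
    intro j
    induction j using Fin.cases with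
    | zero => rw [hψ'def, mulcb_right_zero, mulcb_left_zero]; simp [hγ]
    | succ j =>
      rw [hψ'def, mulcb_right_succ]
      have h1 : ∀ k : Fin (n + 1), (cornerBlock 1 H * ψ) 0 k.succ = ψ 0 k.succ :=
        fun k => mulcb_left_zero H ψ k.succ
      rw [Finset.sum_congr rfl fun k _ => by rw [h1 k]]
      have : ∑ k, ψ 0 k.succ * K j k = (K *ᵥ u) j := by
        rw [mulVec, dotProduct]
        exact Finset.sum_congr rfl fun k _ => mul_comm _ _
      rw [this, hKu]
      simp only [Pi.smul_apply, Pi.single_apply, smul_eq_mul]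
      rcases eq_or_ne j 0 with h | h
      · subst h
        simp [Fin.succ_ne_zero, Fin.succ_zero_eq_one]
      · have hne1 : j.succ ≠ 1 := by
          rw [← Fin.succ_zero_eq_one]; exact Fin.succ_inj.ne.mpr h
        simp [h, Fin.succ_ne_zero, hne1]
  have one_ne : (1 : Fin (n + 2)) ≠ 0 := Ne.symm (by exact zero_ne_one)
  have hA : ψ' 0 1 = s := by rw [hr0]; simp [one_ne]
  have hB : ψ' 0 0 = γ := by rw [hr0]; simp
  have hD : ψ' 1 0 = s := by rw [hc0]; simp [one_ne]
  have hcz : ∀ k : Fin n, ψ' k.succ.succ 0 = 0 := by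
    intro k; rw [hc0]; simp [ss_ne_zero, ss_ne_one]
  have hrz : ∀ k : Fin n, ψ' 0 k.succ.succ = 0 := by
    intro k; rw [hr0]; simp [ss_ne_zero, ss_ne_one]
  -- ψ' 1 1 = -γ
  have e11 : ψ' 1 1 = -γ := by
    have h10 : (ψ'ᵀ * ψ') 1 0 = 0 := by rw [hL']; exact one_apply_ne one_ne
    rw [mul_apply, Fin.sum_univ_succ, Fin.sum_univ_succ] at h10
    simp only [transpose_apply, Fin.succ_zero_eq_one] at h10
    rw [hA, hB, hD, Finset.sum_eq_zero fun k _ => by rw [hcz k, mul_zero]] at h10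
    have h10' : ψ' 1 1 * s = -γ * s := by linarith
    exact mul_right_cancel₀ (ne_of_gt hs0) h10'
  -- rest of column 1 is zero
  have col1 : ∀ k : Fin n, ψ' k.succ.succ 1 = 0 := by
    have h11' : (ψ'ᵀ * ψ') 1 1 = 1 := by rw [hL']; simp
    rw [mul_apply, Fin.sum_univ_succ, Fin.sum_univ_succ] at h11'
    simp only [transpose_apply, Fin.succ_zero_eq_one] at h11'
    rw [hA, e11] at h11'
    have hss : s * s = 1 - γ ^ 2 := by nlinarith [hs2]
    have hgg : -γ * -γ = γ ^ 2 := by ring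
    have hsum : ∑ k : Fin n, ψ' k.succ.succ 1 * ψ' k.succ.succ 1 = 0 := by
      linarith [h11', hss, hgg]
    intro k
    have := (Finset.sum_eq_zero_iff_of_nonneg
      (fun i _ => mul_self_nonneg (ψ' i.succ.succ 1))).mp hsum k (Finset.mem_univ k)
    exact mul_self_eq_zero.mp this
  -- rest of row 1 is zero
  have row1 : ∀ k : Fin n, ψ' 1 k.succ.succ = 0 := by
    have h11' : (ψ' * ψ'ᵀ) 1 1 = 1 := by rw [hR']; simp
    rw [mul_apply, Fin.sum_univ_succ, Fin.sum_univ_succ] at h11'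
    simp only [transpose_apply, Fin.succ_zero_eq_one] at h11'
    rw [hD, e11] at h11'
    have hss : s * s = 1 - γ ^ 2 := by nlinarith [hs2]
    have hgg : -γ * -γ = γ ^ 2 := by ring
    have hsum : ∑ k : Fin n, ψ' 1 k.succ.succ * ψ' 1 k.succ.succ = 0 := by
      linarith [h11', hss, hgg]
    intro k
    have := (Finset.sum_eq_zero_iff_of_nonneg
      (fun i _ => mul_self_nonneg (ψ' 1 i.succ.succ))).mp hsum k (Finset.mem_univ k)
    exact mul_self_eq_zero.mp this
  -- the lower-right block
  set C : Matrix (Fin n) (Fin n) ℝ :=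
    Matrix.of fun k l => ψ' k.succ.succ l.succ.succ with hCdef
  have hC : ∀ k l : Fin n, ∑ m, C m k * C m l = if k = l then 1 else 0 := by
    intro k l
    have h := congrFun (congrFun hL' k.succ.succ) l.succ.succ
    rw [mul_apply, Fin.sum_univ_succ, Fin.sum_univ_succ] at h
    simp only [transpose_apply, Fin.succ_zero_eq_one] at h
    rw [hrz k, row1 k, zero_mul, zero_mul, zero_add, zero_add, one_apply] at h
    simp only [Fin.succ_inj] at h
    exact h
  have hCmem : Cᵀ ∈ Matrix.orthogonalGroup (Fin n) ℝ := by
    rw [Matrix.mem_orthogonalGroup_iff]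
    show Cᵀ * Cᵀᵀ = 1
    rw [transpose_transpose]
    ext k l
    rw [mul_apply, one_apply]
    rw [← hC k l]
    exact Finset.sum_congr rfl fun m _ => rfl
  refine ⟨cornerBlock 1 Cᵀ * H, K, mul_mem (cornerBlock_mem hCmem) hH, hK, ?_⟩
  have hsplit : cornerBlock 1 (cornerBlock 1 Cᵀ * H) * ψ * (cornerBlock 1 K)ᵀ
      = cornerBlock 1 (cornerBlock 1 Cᵀ) * ψ' := by
    rw [hψ'def,
      show cornerBlock (1:ℝ) (cornerBlock 1 Cᵀ * H)
        = cornerBlock 1 (cornerBlock 1 Cᵀ) * cornerBlock 1 H from by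
          rw [cornerBlock_mul, one_mul]]
    simp [mul_assoc]
  rw [hsplit]
  ext i j
  induction i using Fin.cases with
  | zero =>
    rw [mulcb_left_zero, hr0 j]
    simp only [psi0, Matrix.of_apply, if_pos rfl]
    rcases eq_or_ne j 0 with h | h
    · simp [h]
    · rcases eq_or_ne j 1 with h1 | h1 <;> simp [h, h1, hsdef]
  | succ i =>
    rw [mulcb_left_succ]
    induction i using Fin.cases with
    | zero =>
      have : ∑ k, cornerBlock 1 Cᵀ 0 k * ψ' k.succ j = ψ' 1 j := by
        rw [Fin.sum_univ_succ]
        simp [Fin.succ_zero_eq_one]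
      rw [this]
      simp only [psi0, Matrix.of_apply, Fin.succ_zero_eq_one, if_neg one_ne, if_pos rfl]
      induction j using Fin.cases with
      | zero => rw [hc0 1]; simp [one_ne, hsdef]
      | succ j =>
        induction j using Fin.cases with
        | zero => simp [Fin.succ_zero_eq_one, e11, Fin.succ_ne_zero]
        | succ j => simp [row1 j, ss_ne_zero, ss_ne_one]
    | succ m =>
      have hrow : ∑ k, cornerBlock 1 Cᵀ m.succ k * ψ' k.succ j
          = ∑ k : Fin n, C k m * ψ' k.succ.succ j := by
        rw [Fin.sum_univ_succ]
        simp [transpose_apply]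
      rw [hrow]
      have hii : (m.succ.succ : Fin (n + 2)) ≠ 0 := Fin.succ_ne_zero _
      have hii1 : (m.succ.succ : Fin (n + 2)) ≠ 1 := ss_ne_one m
      simp only [psi0, Matrix.of_apply, if_neg hii, if_neg hii1]
      induction j using Fin.cases with
      | zero =>
        have hz : ∑ k : Fin n, C k m * ψ' k.succ.succ 0 = 0 :=
          Finset.sum_eq_zero fun k _ => by rw [hcz k, mul_zero]
        rw [hz, if_neg hii]
      | succ j =>
        induction j using Fin.cases with
        | zero =>
          have hz : ∑ k : Fin n, C k m * ψ' k.succ.succ (0 : Fin (n+1)).succ = 0 :=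
            Finset.sum_eq_zero fun k _ => by rw [Fin.succ_zero_eq_one, col1 k, mul_zero]
          rw [hz, Fin.succ_zero_eq_one, if_neg hii1]
        | succ j =>
          have : ∑ k : Fin n, C k m * ψ' k.succ.succ j.succ.succ
              = ∑ k : Fin n, C k m * C k j := rfl
          rw [this, hC m j]
          have : (m.succ.succ : Fin (n + 2)) = j.succ.succ ↔ m = j := by
            rw [Fin.succ_inj, Fin.succ_inj]
          simp [this]
end

section
/- Let p ≥ 2 and let ψ, ξ ∈ O_p satisfy |ψ₁₁| < 1 and |ξ₁₁| < 1. Then ψ₁₁ = ξ₁₁ if and only if there exist h₁, k₁ ∈ O_{p−1} such that diag(1, h₁) · ψ · diag(1, k₁)ᵀ = ξ. In other words, the map ψ ↦ ψ₀(ψ₁₁) is a maximal invariant for the action (h₁, k₁)·ψ = diag(1, h₁) ψ diag(1, k₁)ᵀ of O_{p−1} × O_{p−1} on O_p⁺ = {ψ ∈ O_p : |ψ₁₁| < 1}. -/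
open MeasureTheory Matrix

section helpers
variable {n : ℕ} (γ δ : ℝ) (A B : Matrix (Fin n) (Fin n) ℝ)

@[simp] lemma cb_zero_zero : cornerBlock γ A 0 0 = γ := by simp [cornerBlock]
@[simp] lemma cb_zero_succ (j : Fin n) : cornerBlock γ A 0 j.succ = 0 := by
  simp [cornerBlock, Fin.succ_ne_zero]
@[simp] lemma cb_succ_zero (i : Fin n) : cornerBlock γ A i.succ 0 = 0 := by
  simp [cornerBlock, Fin.succ_ne_zero]
@[simp] lemma cb_succ_succ (i j : Fin n) : cornerBlock γ A i.succ j.succ = A i j := by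
  simp [cornerBlock, Fin.succ_ne_zero]

lemma cb_transpose : (cornerBlock γ A)ᵀ = cornerBlock γ Aᵀ := by
  ext i j
  refine Fin.cases ?_ (fun a => ?_) i <;> refine Fin.cases ?_ (fun b => ?_) j <;> simp

lemma cb_mul : cornerBlock γ A * cornerBlock δ B = cornerBlock (γ * δ) (A * B) := by
  ext i j
  rw [Matrix.mul_apply]
  refine Fin.cases ?_ (fun a => ?_) i <;> refine Fin.cases ?_ (fun b => ?_) j <;>
    simp [Fin.sum_univ_succ, Matrix.mul_apply]

lemma cb_one : cornerBlock 1 (1 : Matrix (Fin n) (Fin n) ℝ) = 1 := by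
  ext i j
  refine Fin.cases ?_ (fun a => ?_) i <;> refine Fin.cases ?_ (fun b => ?_) j <;>
    simp [Matrix.one_apply, Fin.succ_ne_zero, (Fin.succ_ne_zero _).symm, Fin.succ_inj]

lemma star_eq_transpose (M : Matrix (Fin n) (Fin n) ℝ) : star M = Mᵀ := by
  ext i j; simp [Matrix.star_apply]

lemma transpose_mem {M : Matrix (Fin n) (Fin n) ℝ}
    (h : M ∈ Matrix.orthogonalGroup (Fin n) ℝ) :
    Mᵀ ∈ Matrix.orthogonalGroup (Fin n) ℝ := by
  rw [← star_eq_transpose]; exact Unitary.star_mem h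

lemma cb_mem (hA : A ∈ Matrix.orthogonalGroup (Fin n) ℝ) :
    cornerBlock 1 A ∈ Matrix.orthogonalGroup (Fin (n+1)) ℝ := by
  rw [Matrix.mem_orthogonalGroup_iff] at hA ⊢
  rw [cb_transpose, cb_mul, hA, mul_one, cb_one]

lemma col_orth {p : ℕ} {M : Matrix (Fin p) (Fin p) ℝ}
    (hM : M ∈ Matrix.orthogonalGroup (Fin p) ℝ) (j j' : Fin p) :
    ∑ i, M i j * M i j' = if j = j' then 1 else 0 := by
  have h := (Matrix.mem_orthogonalGroup_iff' _ _).mp hM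
  have h2 := congrFun (congrFun h j) j'
  simpa [Matrix.mul_apply, Matrix.star_apply, Matrix.one_apply] using h2

lemma row_orth {p : ℕ} {M : Matrix (Fin p) (Fin p) ℝ}
    (hM : M ∈ Matrix.orthogonalGroup (Fin p) ℝ) (i i' : Fin p) :
    ∑ j, M i j * M i' j = if i = i' then 1 else 0 := by
  have h := (Matrix.mem_orthogonalGroup_iff _ _).mp hM
  have h2 := congrFun (congrFun h i) i'
  simpa [Matrix.mul_apply, Matrix.star_apply, Matrix.one_apply] using h2

lemma L0 {m : ℕ} (M : Matrix (Fin m) (Fin m) ℝ) (ψ : Matrix (Fin (m+1)) (Fin (m+1)) ℝ)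
    (j : Fin (m+1)) : (cornerBlock 1 M * ψ) 0 j = ψ 0 j := by
  rw [Matrix.mul_apply, Fin.sum_univ_succ]; simp

lemma L1 {m : ℕ} (M : Matrix (Fin m) (Fin m) ℝ) (ψ : Matrix (Fin (m+1)) (Fin (m+1)) ℝ)
    (i : Fin m) (j : Fin (m+1)) :
    (cornerBlock 1 M * ψ) i.succ j = ∑ k, M i k * ψ k.succ j := by
  rw [Matrix.mul_apply, Fin.sum_univ_succ]; simp

lemma R0 {m : ℕ} (M : Matrix (Fin m) (Fin m) ℝ) (ψ : Matrix (Fin (m+1)) (Fin (m+1)) ℝ)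
    (i : Fin (m+1)) : (ψ * (cornerBlock 1 M)ᵀ) i 0 = ψ i 0 := by
  rw [Matrix.mul_apply, Fin.sum_univ_succ]; simp [Matrix.transpose_apply]

lemma R1 {m : ℕ} (M : Matrix (Fin m) (Fin m) ℝ) (ψ : Matrix (Fin (m+1)) (Fin (m+1)) ℝ)
    (i : Fin (m+1)) (j : Fin m) :
    (ψ * (cornerBlock 1 M)ᵀ) i j.succ = ∑ k, ψ i k.succ * M j k := by
  rw [Matrix.mul_apply, Fin.sum_univ_succ]; simp [Matrix.transpose_apply]

lemma sum3 {m : ℕ} (f : Fin (m+2) → ℝ) :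
    ∑ i, f i = f 0 + f 1 + ∑ i : Fin m, f i.succ.succ := by
  rw [Fin.sum_univ_succ, Fin.sum_univ_succ, ← add_assoc, Fin.succ_zero_eq_one]

lemma fin_one_ne_zero {m : ℕ} : (1 : Fin (m+2)) ≠ 0 := by
  rw [← Fin.succ_zero_eq_one]; exact Fin.succ_ne_zero _

lemma succ_succ_ne_one {m : ℕ} (b : Fin m) : ((b.succ.succ : Fin (m+2))) ≠ 1 := by
  rw [← Fin.succ_zero_eq_one]
  exact fun h => Fin.succ_ne_zero b (Fin.succ_inj.mp h)

end helpers


lemma vecMulVec_mul_vecMulVec {p : ℕ} (w : Fin p → ℝ) :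
    vecMulVec w w * vecMulVec w w = (w ⬝ᵥ w) • vecMulVec w w := by
  ext i j
  simp only [Matrix.mul_apply, vecMulVec_apply, Matrix.smul_apply, smul_eq_mul, dotProduct]
  calc ∑ k, (w i * w k) * (w k * w j) = ∑ k, (w k * w k) * (w i * w j) :=
        Finset.sum_congr rfl fun k _ => by ring
    _ = (∑ k, w k * w k) * (w i * w j) := by rw [Finset.sum_mul]

lemma refl_mem {p : ℕ} (w : Fin p → ℝ) (hw : w ≠ 0) :
    reflMatrix p w ∈ Matrix.orthogonalGroup (Fin p) ℝ := by
  have hww : w ⬝ᵥ w ≠ 0 := fun h => hw (dotProduct_self_eq_zero.mp h)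
  rw [Matrix.mem_orthogonalGroup_iff]
  have hstar : star (reflMatrix p w) = reflMatrix p w := by
    ext i j
    simp only [Matrix.star_apply, star_trivial, reflMatrix, Matrix.sub_apply,
      Matrix.smul_apply, vecMulVec_apply, smul_eq_mul, Matrix.one_apply]
    by_cases h : i = j
    · subst h; ring
    · rw [if_neg h, if_neg (Ne.symm h)]; ring
  rw [← star_eq_transpose, hstar]
  unfold reflMatrix
  set t := 2 / (w ⬝ᵥ w) with ht0
  set W := vecMulVec w w with hW
  have expand : (1 - t•W) * (1 - t•W) = 1 - (t+t) • W + (t*t) • (W*W) := by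
    simp only [sub_mul, mul_sub, one_mul, mul_one, Matrix.mul_smul, Matrix.smul_mul,
      smul_smul, add_smul]
    abel
  have ht : t * t * (w ⬝ᵥ w) = t + t := by
    rw [ht0]; field_simp; ring
  rw [expand, vecMulVec_mul_vecMulVec, smul_smul, ht, ← hW, sub_add_cancel]

lemma refl_mulVec {p : ℕ} (w v : Fin p → ℝ) (h : w ⬝ᵥ w = 2 * (w ⬝ᵥ v)) (hw : w ≠ 0) :
    reflMatrix p w *ᵥ v = v - w := by
  have hww : w ⬝ᵥ w ≠ 0 := fun h => hw (dotProduct_self_eq_zero.mp h)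
  have hWv : vecMulVec w w *ᵥ v = (w ⬝ᵥ v) • w := by
    ext i
    simp only [Matrix.mulVec, vecMulVec_apply, dotProduct, Pi.smul_apply, smul_eq_mul]
    calc ∑ k, (w i * w k) * v k = ∑ k, (w k * v k) * w i :=
          Finset.sum_congr rfl fun k _ => by ring
      _ = (∑ k, w k * v k) * w i := by rw [Finset.sum_mul]
  unfold reflMatrix
  rw [Matrix.sub_mulVec, Matrix.one_mulVec, Matrix.smul_mulVec, hWv, smul_smul]
  have hwv : w ⬝ᵥ v ≠ 0 := by
    intro h0; rw [h0, mul_zero] at h; exact hww h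
  have : 2 / (w ⬝ᵥ w) * (w ⬝ᵥ v) = 1 := by
    rw [h]; field_simp
  rw [this, one_smul]

/-- Householder: any nonzero vector can be rotated to `√(v⬝v) • e₀`. -/
lemma householder {m : ℕ} (v : Fin (m+1) → ℝ) (hv : v ≠ 0) :
    ∃ H ∈ Matrix.orthogonalGroup (Fin (m+1)) ℝ,
      H *ᵥ v = Real.sqrt (v ⬝ᵥ v) • (Pi.single 0 1 : Fin (m+1) → ℝ) := by
  set c := Real.sqrt (v ⬝ᵥ v) with hc
  have hvv : 0 < v ⬝ᵥ v := by
    rcases lt_or_eq_of_le (Finset.sum_nonneg (fun i _ => mul_self_nonneg (v i))) with h | h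
    · exact h
    · exact absurd (dotProduct_self_eq_zero.mp h.symm) hv
  have hc2 : c ^ 2 = v ⬝ᵥ v := Real.sq_sqrt hvv.le
  set e : Fin (m+1) → ℝ := (Pi.single 0 1 : Fin (m+1) → ℝ) with he
  set w : Fin (m+1) → ℝ := v - c • e with hwdef
  by_cases hw : w = 0
  · refine ⟨1, Submonoid.one_mem _, ?_⟩
    rw [Matrix.one_mulVec]
    have h2 := sub_eq_zero.mp hw
    linear_combination (norm := module) h2
  · refine ⟨reflMatrix _ w, refl_mem w hw, ?_⟩
    have hee : e ⬝ᵥ e = 1 := by simp [he]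
    have hev : e ⬝ᵥ v = v 0 := by simp [he, single_dotProduct]
    have hve : v ⬝ᵥ e = v 0 := by simp [he, dotProduct_single]
    have key : w ⬝ᵥ w = 2 * (w ⬝ᵥ v) := by
      simp only [hwdef, sub_dotProduct, dotProduct_sub, smul_dotProduct, dotProduct_smul,
        smul_eq_mul, hee, hev, hve]
      nlinarith [hc2]
    rw [refl_mulVec w v key hw, hwdef]
    module

lemma reduce (n : ℕ) (ψ : Matrix (Fin (n+2)) (Fin (n+2)) ℝ)
    (hψ : ψ ∈ Matrix.orthogonalGroup (Fin (n+2)) ℝ) (hψ11 : |ψ 0 0| < 1) :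
    ∃ h ∈ Matrix.orthogonalGroup (Fin (n+1)) ℝ, ∃ k ∈ Matrix.orthogonalGroup (Fin (n+1)) ℝ,
      cornerBlock 1 h * ψ * (cornerBlock 1 k)ᵀ = psi0 n (ψ 0 0) := by
  have hγ2 : (ψ 0 0)^2 < 1 := by nlinarith [abs_nonneg (ψ 0 0), sq_abs (ψ 0 0)]
  set s := Real.sqrt (1 - (ψ 0 0)^2) with hsdef
  have hs2 : s^2 = 1 - (ψ 0 0)^2 := Real.sq_sqrt (by linarith)
  have hspos : 0 < s := Real.sqrt_pos.mpr (by linarith)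
  -- first column below the corner
  have hvv : (fun i : Fin (n+1) => ψ i.succ 0) ⬝ᵥ (fun i => ψ i.succ 0) = 1 - (ψ 0 0)^2 := by
    have h := col_orth hψ 0 0
    rw [Fin.sum_univ_succ, if_pos rfl] at h
    simp only [dotProduct]
    linear_combination h
  have hvne : (fun i : Fin (n+1) => ψ i.succ 0) ≠ 0 := by
    intro h0
    rw [h0, zero_dotProduct] at hvv
    nlinarith
  obtain ⟨H, hHO, hHv⟩ := householder _ hvne
  rw [hvv, ← hsdef] at hHv
  -- first row beyond the corner
  have huu : (fun j : Fin (n+1) => ψ 0 j.succ) ⬝ᵥ (fun j => ψ 0 j.succ) = 1 - (ψ 0 0)^2 := by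
    have h := row_orth hψ 0 0
    rw [Fin.sum_univ_succ, if_pos rfl] at h
    simp only [dotProduct]
    linear_combination h
  have hune : (fun j : Fin (n+1) => ψ 0 j.succ) ≠ 0 := by
    intro h0
    rw [h0, zero_dotProduct] at huu
    nlinarith
  obtain ⟨K, hKO, hKu⟩ := householder _ hune
  rw [huu, ← hsdef] at hKu
  set ψ₂ := cornerBlock 1 H * ψ * (cornerBlock 1 K)ᵀ with hψ₂def
  have hψ₂O : ψ₂ ∈ Matrix.orthogonalGroup (Fin (n+2)) ℝ :=
    mul_mem (mul_mem (cb_mem _ hHO) hψ) (transpose_mem (cb_mem _ hKO))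
  have h200 : ψ₂ 0 0 = ψ 0 0 := by rw [hψ₂def, R0, L0]
  have h2c : ∀ i : Fin (n+1), ψ₂ i.succ 0 = if i = 0 then s else 0 := by
    intro i
    rw [hψ₂def, R0, L1]
    have h := congrFun hHv i
    simp only [Matrix.mulVec, dotProduct] at h
    rw [h]
    simp [Pi.single_apply]
  have h2r : ∀ j : Fin (n+1), ψ₂ 0 j.succ = if j = 0 then s else 0 := by
    intro j
    rw [hψ₂def, R1]
    have h := congrFun hKu j
    simp only [Matrix.mulVec, dotProduct] at h
    calc ∑ k, (cornerBlock 1 H * ψ) 0 k.succ * K j k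
        = ∑ k, K j k * ψ 0 k.succ := by
          refine Finset.sum_congr rfl fun k _ => ?_
          rw [L0, mul_comm]
      _ = (if j = 0 then s else 0) := by rw [h]; simp [Pi.single_apply]
  have h210 : ψ₂ 1 0 = s := by
    have := h2c 0; rwa [Fin.succ_zero_eq_one, if_pos rfl] at this
  have h201 : ψ₂ 0 1 = s := by
    have := h2r 0; rwa [Fin.succ_zero_eq_one, if_pos rfl] at this
  have h2c' : ∀ i : Fin n, ψ₂ i.succ.succ 0 = 0 := fun i => by
    have := h2c i.succ; rwa [if_neg (Fin.succ_ne_zero i)] at this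
  have h2r' : ∀ j : Fin n, ψ₂ 0 j.succ.succ = 0 := fun j => by
    have := h2r j.succ; rwa [if_neg (Fin.succ_ne_zero j)] at this
  have hz1 : ∀ j : Fin n, ψ₂ 1 j.succ.succ = 0 := by
    intro j
    have h := col_orth hψ₂O 0 j.succ.succ
    rw [sum3 (fun i => ψ₂ i 0 * ψ₂ i j.succ.succ),
      if_neg (Ne.symm (Fin.succ_ne_zero _))] at h
    have hsum : ∑ i : Fin n, ψ₂ i.succ.succ 0 * ψ₂ i.succ.succ j.succ.succ = 0 :=
      Finset.sum_eq_zero fun i _ => by rw [h2c' i, zero_mul]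
    rw [h2r' j, h210, mul_zero, zero_add, hsum, add_zero] at h
    exact (mul_eq_zero.mp h).resolve_left (ne_of_gt hspos)
  have hz2 : ∀ i : Fin n, ψ₂ i.succ.succ 1 = 0 := by
    intro i
    have h := row_orth hψ₂O 0 i.succ.succ
    rw [sum3 (fun j => ψ₂ 0 j * ψ₂ i.succ.succ j),
      if_neg (Ne.symm (Fin.succ_ne_zero _))] at h
    have hsum : ∑ j : Fin n, ψ₂ 0 j.succ.succ * ψ₂ i.succ.succ j.succ.succ = 0 :=
      Finset.sum_eq_zero fun j _ => by rw [h2r' j, zero_mul]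
    rw [h2c' i, mul_zero, zero_add, hsum, add_zero, h201] at h
    exact (mul_eq_zero.mp h).resolve_left (ne_of_gt hspos)
  have h11 : ψ₂ 1 1 = -(ψ 0 0) := by
    have h := row_orth hψ₂O 0 1
    rw [sum3 (fun j => ψ₂ 0 j * ψ₂ 1 j), if_neg (Ne.symm fin_one_ne_zero)] at h
    have hsum : ∑ j : Fin n, ψ₂ 0 j.succ.succ * ψ₂ 1 j.succ.succ = 0 :=
      Finset.sum_eq_zero fun j _ => by rw [h2r' j, zero_mul]
    rw [h200, h210, h201, hsum, add_zero] at h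
    have hfac : s * (ψ₂ 1 1 + ψ 0 0) = 0 := by linear_combination h
    have := (mul_eq_zero.mp hfac).resolve_left (ne_of_gt hspos)
    linarith
  have hDcol : ∀ b c : Fin n,
      ∑ k : Fin n, ψ₂ k.succ.succ b.succ.succ * ψ₂ k.succ.succ c.succ.succ
        = if b = c then 1 else 0 := by
    intro b c
    have h := col_orth hψ₂O b.succ.succ c.succ.succ
    rw [sum3 (fun i => ψ₂ i b.succ.succ * ψ₂ i c.succ.succ)] at h
    rw [h2r' b, zero_mul, hz1 b, zero_mul, zero_add, zero_add] at h
    rw [h]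
    simp [Fin.succ_inj]
  set D : Matrix (Fin n) (Fin n) ℝ :=
    Matrix.of (fun i j => ψ₂ i.succ.succ j.succ.succ) with hD
  have hDO : D ∈ Matrix.orthogonalGroup (Fin n) ℝ := by
    rw [Matrix.mem_orthogonalGroup_iff']
    ext i j
    rw [Matrix.mul_apply, Matrix.one_apply]
    calc ∑ k, star D i k * D k j
        = ∑ k : Fin n, ψ₂ k.succ.succ i.succ.succ * ψ₂ k.succ.succ j.succ.succ := by
          refine Finset.sum_congr rfl fun k _ => ?_
          rw [hD]
          simp [Matrix.star_apply]
      _ = if i = j then 1 else 0 := hDcol i j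
  refine ⟨cornerBlock 1 Dᵀ * H, mul_mem (cb_mem _ (transpose_mem hDO)) hHO, K, hKO, ?_⟩
  have hsplit : cornerBlock (1:ℝ) (cornerBlock 1 Dᵀ * H)
      = cornerBlock 1 (cornerBlock 1 Dᵀ) * cornerBlock 1 H := by
    rw [cb_mul, one_mul]
  rw [hsplit, mul_assoc, mul_assoc,
    ← mul_assoc (cornerBlock 1 H) ψ ((cornerBlock 1 K)ᵀ), ← hψ₂def]
  -- now: cornerBlock 1 (cornerBlock 1 Dᵀ) * ψ₂ = psi0 n (ψ 0 0)
  ext i j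
  refine Fin.cases ?_ (fun a => ?_) i
  · rw [L0]
    refine Fin.cases ?_ (fun b => ?_) j
    · rw [h200]; simp [psi0]
    · refine Fin.cases ?_ (fun c => ?_) b
      · rw [Fin.succ_zero_eq_one, h201]
        simp [psi0, fin_one_ne_zero, hsdef]
      · rw [h2r' c]
        simp [psi0, Fin.succ_ne_zero, succ_succ_ne_one]
  · rw [L1]
    refine Fin.cases ?_ (fun b => ?_) a
    · rw [Fin.sum_univ_succ]
      simp only [cb_zero_zero, cb_zero_succ, one_mul, zero_mul, Finset.sum_const_zero,
        add_zero, Fin.succ_zero_eq_one]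
      refine Fin.cases ?_ (fun c => ?_) j
      · rw [h210]
        simp [psi0, fin_one_ne_zero, hsdef]
      · refine Fin.cases ?_ (fun d => ?_) c
        · rw [Fin.succ_zero_eq_one, h11]
          simp [psi0, fin_one_ne_zero]
        · rw [hz1 d]
          have h1 : (d.succ.succ : Fin (n+2)) ≠ 0 := Fin.succ_ne_zero _
          have h2 : (d.succ.succ : Fin (n+2)) ≠ 1 := succ_succ_ne_one d
          simp [psi0, h1, h2, fin_one_ne_zero]
    · rw [Fin.sum_univ_succ]
      simp only [cb_succ_zero, zero_mul, zero_add, cb_succ_succ]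
      refine Fin.cases ?_ (fun c => ?_) j
      · have hsum : ∑ k : Fin n, Dᵀ b k * ψ₂ k.succ.succ 0 = 0 :=
          Finset.sum_eq_zero fun k _ => by rw [h2c' k, mul_zero]
        rw [hsum]
        simp [psi0, Fin.succ_ne_zero, succ_succ_ne_one]
      · refine Fin.cases ?_ (fun d => ?_) c
        · have hsum : ∑ k : Fin n, Dᵀ b k * ψ₂ k.succ.succ (0 : Fin (n+1)).succ = 0 :=
            Finset.sum_eq_zero fun k _ => by
              rw [Fin.succ_zero_eq_one, hz2 k, mul_zero]
          rw [hsum, Fin.succ_zero_eq_one]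
          simp [psi0, Fin.succ_ne_zero, succ_succ_ne_one]
        · have hsum : ∑ k : Fin n, Dᵀ b k * ψ₂ k.succ.succ d.succ.succ
              = if b = d then 1 else 0 := by
            rw [← hDcol b d]
            refine Finset.sum_congr rfl fun k _ => ?_
            rw [hD]
            simp [Matrix.transpose_apply]
          rw [hsum]
          simp only [psi0, Matrix.of_apply]
          rw [if_neg (Fin.succ_ne_zero _), if_neg (succ_succ_ne_one _)]
          by_cases hbd : b = d
          · subst hbd; simp
          · rw [if_neg hbd, if_neg (by simp [Fin.succ_inj, hbd])]

/-- Proposition 2.2.  Let `p = n+2 ≥ 2` and let `ψ, ξ ∈ O_p` with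
`|ψ₁₁| < 1` and `|ξ₁₁| < 1`.  Then `ψ₁₁ = ξ₁₁` iff `ψ` and `ξ` lie in the same orbit of the
action `(h₁,k₁)·ψ = diag(1,h₁) ψ diag(1,k₁)ᵀ` of `O_{p-1} × O_{p-1}` on `O_p⁺`; i.e. the map
`ψ ↦ ψ₀(ψ₁₁)` is a maximal invariant. -/
theorem entry_eq_iff_same_orbit (n : ℕ)
    (ψ ξ : Matrix (Fin (n + 2)) (Fin (n + 2)) ℝ)
    (hψ : ψ ∈ Matrix.orthogonalGroup (Fin (n + 2)) ℝ) (hψ11 : |ψ 0 0| < 1)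
    (hξ : ξ ∈ Matrix.orthogonalGroup (Fin (n + 2)) ℝ) (hξ11 : |ξ 0 0| < 1) :
    ψ 0 0 = ξ 0 0 ↔
      ∃ h₁ k₁ : Matrix (Fin (n + 1)) (Fin (n + 1)) ℝ,
        h₁ ∈ Matrix.orthogonalGroup (Fin (n + 1)) ℝ ∧
        k₁ ∈ Matrix.orthogonalGroup (Fin (n + 1)) ℝ ∧
        cornerBlock 1 h₁ * ψ * (cornerBlock 1 k₁)ᵀ = ξ := by
  constructor
  · intro heq
    obtain ⟨h₁, hh₁, k₁, hk₁, e₁⟩ := reduce n ψ hψ hψ11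
    obtain ⟨h₂, hh₂, k₂, hk₂, e₂⟩ := reduce n ξ hξ hξ11
    have hh2t : h₂ᵀ * h₂ = 1 := by
      have h := (Matrix.mem_orthogonalGroup_iff' _ _).mp hh₂
      exact h
    have hk2t : k₂ᵀ * k₂ = 1 := by
      have h := (Matrix.mem_orthogonalGroup_iff' _ _).mp hk₂
      exact h
    have hA : cornerBlock (1:ℝ) h₂ᵀ * cornerBlock 1 h₂ = 1 := by
      rw [cb_mul, one_mul, hh2t, cb_one]
    have hB : (cornerBlock (1:ℝ) k₂)ᵀ * cornerBlock 1 k₂ = 1 := by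
      rw [cb_transpose, cb_mul, one_mul, hk2t, cb_one]
    have hsplit1 : cornerBlock (1:ℝ) (h₂ᵀ * h₁) = cornerBlock 1 h₂ᵀ * cornerBlock 1 h₁ := by
      rw [cb_mul, one_mul]
    have hsplit2 : (cornerBlock (1:ℝ) (k₂ᵀ * k₁))ᵀ
        = (cornerBlock 1 k₁)ᵀ * cornerBlock 1 k₂ := by
      have h := cb_mul (1:ℝ) 1 k₁ᵀ k₂
      rw [one_mul] at h
      rw [cb_transpose, Matrix.transpose_mul, Matrix.transpose_transpose, ← h, cb_transpose]
    refine ⟨h₂ᵀ * h₁, k₂ᵀ * k₁, mul_mem (transpose_mem hh₂) hh₁,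
      mul_mem (transpose_mem hk₂) hk₁, ?_⟩
    calc cornerBlock 1 (h₂ᵀ * h₁) * ψ * (cornerBlock 1 (k₂ᵀ * k₁))ᵀ
        = cornerBlock 1 h₂ᵀ * (cornerBlock 1 h₁ * ψ * (cornerBlock 1 k₁)ᵀ)
            * cornerBlock 1 k₂ := by
          rw [hsplit1, hsplit2]; noncomm_ring
      _ = cornerBlock 1 h₂ᵀ * (cornerBlock 1 h₂ * ξ * (cornerBlock 1 k₂)ᵀ)
            * cornerBlock 1 k₂ := by rw [e₁, heq, e₂]
      _ = (cornerBlock 1 h₂ᵀ * cornerBlock 1 h₂) * ξ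
            * ((cornerBlock 1 k₂)ᵀ * cornerBlock 1 k₂) := by noncomm_ring
      _ = ξ := by rw [hA, hB, one_mul, mul_one]
  · rintro ⟨h₁, k₁, hh₁, hk₁, heq⟩
    rw [← heq, R0, L0]
end

section
/- Let G be a compact metrizable topological group acting continuously and transitively on Polish spaces X and Y with open orbit maps, let t : X → Y be a continuous surjective equivariant map (t(g•x) = g•t(x)), let P be the G-invariant Borel probability measure on X, and let Q = t⁎P. Then there exists a Markov kernel R from Y to X (a measurable family y ↦ R(·|y) of Borel probability measures on X) such that: (i) R(g•B | g•y) = R(B | y) for all Borel B ⊆ X, g ∈ G, y ∈ Y; (ii) R(t⁻¹({y}) | y) = 1 for all y ∈ Y; and (iii) for every bounded Borel measurable f : X → ℝ, ∫_Y ∫_X f(x) R(dx|y) Q(dy) = ∫_X f(x) P(dx). In particular, R is a regular conditional distribution of X given t(X) = y when X has law P. -/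
open MeasureTheory Pointwise
open scoped ENNReal

/-- Theorem 3.1.  Let `G` be a compact metrizable topological group acting
continuously and transitively with open orbit maps on Polish spaces `X` and `Y`, let
`t : X → Y` be a continuous surjective equivariant map, let `P` be the `G`-invariant Borel
probability measure on `X` and `Q = t⁎P`.  Then there is a Markov kernel `R` from `Y` to `X`
such that (i) `R(g•B | g•y) = R(B | y)`, (ii) `R(t⁻¹{y} | y) = 1`, and (iii)
`∫∫ f(x) R(dx|y) Q(dy) = ∫ f dP` for all bounded Borel `f`; i.e. `R` is an invariant regular
conditional distribution of `X` given `t(X) = y`. -/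
theorem exists_invariant_conditional_kernel (G X Y : Type*)
    [TopologicalSpace G] [Group G] [IsTopologicalGroup G] [CompactSpace G]
    [TopologicalSpace.MetrizableSpace G]
    [TopologicalSpace X] [PolishSpace X] [MeasurableSpace X] [BorelSpace X]
    [TopologicalSpace Y] [PolishSpace Y] [MeasurableSpace Y] [BorelSpace Y]
    [MulAction G X] [ContinuousSMul G X] [MulAction G Y] [ContinuousSMul G Y]
    (htransX : ∀ x₁ x₂ : X, ∃ g : G, g • x₁ = x₂)
    (htransY : ∀ y₁ y₂ : Y, ∃ g : G, g • y₁ = y₂)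
    (hopenX : ∀ x : X, IsOpenMap fun g : G => g • x)
    (hopenY : ∀ y : Y, IsOpenMap fun g : G => g • y)
    (t : X → Y) (htc : Continuous t) (hsurj : Function.Surjective t)
    (hequiv : ∀ (g : G) (x : X), t (g • x) = g • t x)
    (P : Measure X) (hprob : IsProbabilityMeasure P)
    (hinv : ∀ g : G, Measure.map (fun x : X => g • x) P = P) :
    ∃ R : ProbabilityTheory.Kernel Y X, ProbabilityTheory.IsMarkovKernel R ∧
      (∀ B : Set X, MeasurableSet B → ∀ (g : G) (y : Y), R (g • y) (g • B) = R y B) ∧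
      (∀ y : Y, R y (t ⁻¹' {y}) = 1) ∧
      (∀ f : X → ℝ, Measurable f → (∃ C : ℝ, ∀ x : X, |f x| ≤ C) →
        ∫ y, ∫ x, f x ∂(R y) ∂(Measure.map t P) = ∫ x, f x ∂P) := by
  classical
  rcases isEmpty_or_nonempty X with hX | hX
  · exfalso
    have h0 : P Set.univ = 1 := measure_univ
    rw [Set.univ_eq_empty_iff.mpr hX, measure_empty] at h0
    exact zero_ne_one h0
  borelize G
  -- basic measurability facts
  have hsmulY : Measurable fun p : G × Y => p.1 • p.2 := continuous_smul.measurable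
  have hsmulX : Measurable fun p : G × X => p.1 • p.2 := continuous_smul.measurable
  have hsmulYc : ∀ g : G, Measurable fun y : Y => g • y := fun g =>
    hsmulY.comp (measurable_const.prodMk measurable_id)
  have hsmulXc : ∀ g : G, Measurable fun x : X => g • x := fun g =>
    hsmulX.comp (measurable_const.prodMk measurable_id)
  have horbm : ∀ y : Y, Measurable fun g : G => g • y := fun y =>
    hsmulY.comp (measurable_id.prodMk measurable_const)
  -- the Haar probability measure on `G`
  set μ : Measure G := Measure.haarMeasure (⊤ : TopologicalSpace.PositiveCompacts G) with hμdef
  haveI : IsProbabilityMeasure μ := by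
    constructor
    rw [hμdef, ← TopologicalSpace.PositiveCompacts.coe_top (α := G)]
    exact Measure.haarMeasure_self
  haveI hright : μ.IsMulRightInvariant := by
    refine ⟨fun g₀ => ?_⟩
    have hconj : Measure.map (⇑((MulAut.conj g₀⁻¹).toMonoidHom)) μ = μ := by
      refine (MonoidHom.measurePreserving (f := (MulAut.conj g₀⁻¹).toMonoidHom) ?_
        (MulAut.conj g₀⁻¹).surjective rfl).map_eq
      show Continuous fun x : G => g₀⁻¹ * x * g₀⁻¹⁻¹
      exact (continuous_const.mul continuous_id).mul continuous_const
    have hcomp : (fun g : G => g * g₀)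
        = (fun g : G => g₀ * g) ∘ ⇑((MulAut.conj g₀⁻¹).toMonoidHom) := by
      funext g
      simp [MulAut.conj_apply, mul_assoc]
    have hmeasconj : Measurable ⇑((MulAut.conj g₀⁻¹).toMonoidHom) := by
      show Measurable fun x : G => g₀⁻¹ * x * g₀⁻¹⁻¹
      exact ((measurable_id.const_mul g₀⁻¹).mul_const g₀⁻¹⁻¹)
    rw [hcomp, ← Measure.map_map (measurable_const_mul g₀) hmeasconj, hconj,
      map_mul_left_eq_self]
  -- the pushforward measure `Q` on `Y`
  set Q : Measure Y := Measure.map t P with hQdef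
  haveI : IsProbabilityMeasure Q := Measure.isProbabilityMeasure_map htc.measurable.aemeasurable
  have hQinv : ∀ g : G, Measure.map (fun y : Y => g • y) Q = Q := by
    intro g
    rw [hQdef, Measure.map_map (hsmulYc g) htc.measurable]
    have hcomm : (fun y : Y => g • y) ∘ t = t ∘ fun x : X => g • x := by
      funext x; exact (hequiv g x).symm
    rw [hcomm, ← Measure.map_map htc.measurable (hsmulXc g), hinv g]
  -- every orbit map pushes `μ` to `Q`
  have horb : ∀ y : Y, Measure.map (fun g : G => g • y) μ = Q := by
    have key : ∀ A : Set Y, MeasurableSet A → ∀ y₁ y₂ : Y,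
        μ ((fun g : G => g • y₁) ⁻¹' A) = μ ((fun g : G => g • y₂) ⁻¹' A) := by
      intro A hA y₁ y₂
      obtain ⟨h, hh⟩ := htransY y₁ y₂
      have hpre : (fun g : G => g • y₂) ⁻¹' A
          = (fun g : G => g * h) ⁻¹' ((fun g : G => g • y₁) ⁻¹' A) := by
        ext g
        simp [← hh, mul_smul]
      rw [hpre, measure_preimage_mul_right]
    intro y
    ext A hA
    rw [Measure.map_apply (horbm y) hA]
    have hindm : Measurable (A.indicator fun _ : Y => (1 : ℝ≥0∞)) :=
      measurable_const.indicator hA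
    have step1 : Q A = ∫⁻ g, ∫⁻ y', A.indicator (fun _ => (1 : ℝ≥0∞)) (g • y') ∂Q ∂μ := by
      have hinner : ∀ g : G,
          ∫⁻ y', A.indicator (fun _ => (1 : ℝ≥0∞)) (g • y') ∂Q = Q A := by
        intro g
        have : ∀ y' : Y, A.indicator (fun _ => (1 : ℝ≥0∞)) (g • y')
            = ((fun y'' : Y => g • y'') ⁻¹' A).indicator (fun _ => (1 : ℝ≥0∞)) y' := by
          intro y'
          by_cases h : g • y' ∈ A <;> simp [h, Set.indicator_apply]
        simp_rw [this]
        rw [lintegral_indicator (hsmulYc g hA), setLIntegral_one]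
        conv_rhs => rw [← hQinv g]
        rw [Measure.map_apply (hsmulYc g) hA]
      simp_rw [hinner]
      simp
    have step2 : ∫⁻ g, ∫⁻ y', A.indicator (fun _ => (1 : ℝ≥0∞)) (g • y') ∂Q ∂μ
        = ∫⁻ y', ∫⁻ g, A.indicator (fun _ => (1 : ℝ≥0∞)) (g • y') ∂μ ∂Q := by
      exact lintegral_lintegral_swap ((hindm.comp hsmulY).aemeasurable)
    have step3 : ∀ y' : Y, ∫⁻ g, A.indicator (fun _ => (1 : ℝ≥0∞)) (g • y') ∂μ
        = μ ((fun g : G => g • y') ⁻¹' A) := by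
      intro y'
      have : ∀ g : G, A.indicator (fun _ => (1 : ℝ≥0∞)) (g • y')
          = ((fun g' : G => g' • y') ⁻¹' A).indicator (fun _ => (1 : ℝ≥0∞)) g := by
        intro g
        by_cases h : g • y' ∈ A <;> simp [h, Set.indicator_apply]
      simp_rw [this]
      rw [lintegral_indicator (horbm y' hA), setLIntegral_one]
    have : Q A = μ ((fun g : G => g • y) ⁻¹' A) := by
      rw [step1, step2]
      have : ∀ y' : Y, ∫⁻ g, A.indicator (fun _ => (1 : ℝ≥0∞)) (g • y') ∂μ
          = μ ((fun g : G => g • y) ⁻¹' A) := fun y' => (step3 y').trans (key A hA y' y)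
      simp_rw [this]
      simp
    exact this.symm
  -- the joint law of `(t x, x)` and its disintegration
  set ρ : Measure (Y × X) := Measure.map (fun x : X => (t x, x)) P with hρdef
  have hpair : Measurable fun x : X => (t x, x) := htc.measurable.prodMk measurable_id
  haveI : IsProbabilityMeasure ρ := Measure.isProbabilityMeasure_map hpair.aemeasurable
  have hfst : ρ.fst = Q := by
    rw [hρdef, hQdef, Measure.fst, Measure.map_map measurable_fst hpair]
    rfl
  have hD : MeasurableSet {p : Y × X | t p.2 = p.1} :=
    (isClosed_eq (htc.comp continuous_snd) continuous_fst).measurableSet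
  have hρD : ρ {p : Y × X | t p.2 = p.1} = 1 := by
    rw [hρdef, Measure.map_apply hpair hD]
    have : (fun x : X => (t x, x)) ⁻¹' {p : Y × X | t p.2 = p.1} = Set.univ := by
      ext x; simp
    rw [this]; exact measure_univ
  have hmeas1 : Measurable fun y' : Y => ρ.condKernel y' {x : X | t x = y'} :=
    ProbabilityTheory.Kernel.measurable_kernel_prodMk_left (κ := ρ.condKernel) hD
  have hae : ∀ᵐ y' ∂Q, ρ.condKernel y' {x : X | t x = y'} = 1 := by
    have hint : ∫⁻ y', ρ.condKernel y' {x : X | t x = y'} ∂Q = 1 := by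
      rw [← hfst]
      have h := Measure.lintegral_condKernel_mem (ρ := ρ) hD
      rw [hρD] at h
      exact h
    have hle : ∀ y', ρ.condKernel y' {x : X | t x = y'} ≤ 1 := fun y' => prob_le_one
    have hsub : ∫⁻ y', (1 - ρ.condKernel y' {x : X | t x = y'}) ∂Q = 0 := by
      rw [lintegral_sub hmeas1 (by rw [hint]; exact ENNReal.one_ne_top) (ae_of_all _ hle),
        hint, lintegral_one, measure_univ, tsub_self]
    have h0 := (lintegral_eq_zero_iff (measurable_const.sub hmeas1)).mp hsub
    filter_upwards [h0] with y' hy'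
    have h1 : (1 : ℝ≥0∞) ≤ ρ.condKernel y' {x : X | t x = y'} :=
      tsub_eq_zero_iff_le.mp hy'
    exact le_antisymm (hle y') h1
  have haeg : ∀ y : Y, ∀ᵐ g ∂μ, ρ.condKernel (g • y) {x : X | t x = g • y} = 1 := by
    intro y
    have hQae : ∀ᵐ y' ∂(Measure.map (fun g : G => g • y) μ),
        ρ.condKernel y' {x : X | t x = y'} = 1 := by
      rw [horb y]; exact hae
    have hset : MeasurableSet {y' : Y | ρ.condKernel y' {x : X | t x = y'} = 1} :=
      hmeas1 (measurableSet_singleton 1)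
    exact (MeasureTheory.ae_map_iff (horbm y).aemeasurable hset).mp hQae
  -- the kernel `S`
  set κ' : ProbabilityTheory.Kernel (G × Y) X :=
    (ρ.condKernel).comap (fun p : G × Y => p.1 • p.2) hsmulY with hκ'def
  set F : G × Y → Measure X :=
    fun p => Measure.map (fun x : X => p.1⁻¹ • x) (ρ.condKernel (p.1 • p.2)) with hFdef
  have hFapp : ∀ (B : Set X), MeasurableSet B → ∀ p : G × Y,
      F p B = ρ.condKernel (p.1 • p.2) ((fun x : X => p.1⁻¹ • x) ⁻¹' B) := by
    intro B hB p
    rw [hFdef, Measure.map_apply (hsmulXc p.1⁻¹) hB]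
  have hFmeas : Measurable F := by
    refine Measure.measurable_of_measurable_coe _ fun B hB => ?_
    have hsB : MeasurableSet {q : (G × Y) × X | q.1.1⁻¹ • q.2 ∈ B} := by
      have hm : Measurable fun q : (G × Y) × X => q.1.1⁻¹ • q.2 :=
        hsmulX.comp ((measurable_fst.fst.inv).prodMk measurable_snd)
      exact hm hB
    have hmeas := ProbabilityTheory.Kernel.measurable_kernel_prodMk_left (κ := κ') hsB
    have heq : (fun p : G × Y => F p B)
        = fun p : G × Y => κ' p (Prod.mk p ⁻¹' {q : (G × Y) × X | q.1.1⁻¹ • q.2 ∈ B}) := by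
      funext p
      rw [hFapp B hB p]
      rfl
    rw [heq]
    exact hmeas
  have hFy : ∀ y : Y, Measurable fun g : G => F (g, y) := fun y =>
    hFmeas.comp (measurable_id.prodMk measurable_const)
  have hSmeas : Measurable fun y : Y => μ.bind fun g => F (g, y) := by
    refine Measure.measurable_of_measurable_coe _ fun B hB => ?_
    have heq : (fun y : Y => (μ.bind fun g => F (g, y)) B)
        = fun y : Y => ∫⁻ g, F (g, y) B ∂μ :=
      funext fun y => Measure.bind_apply hB (hFy y).aemeasurable
    rw [heq]
    exact Measurable.lintegral_prod_right'
      ((Measure.measurable_coe hB).comp (hFmeas.comp measurable_swap))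
  set S : ProbabilityTheory.Kernel Y X :=
    ⟨fun y => μ.bind fun g => F (g, y), hSmeas⟩ with hSdef
  have hSapp : ∀ y : Y, S y = μ.bind fun g => F (g, y) := fun y => rfl
  have hSB : ∀ (y : Y) (B : Set X), MeasurableSet B →
      S y B = ∫⁻ g, ρ.condKernel (g • y) ((fun x : X => g⁻¹ • x) ⁻¹' B) ∂μ := by
    intro y B hB
    rw [hSapp, Measure.bind_apply hB (hFy y).aemeasurable]
    exact lintegral_congr fun g => hFapp B hB (g, y)
  haveI hSM : ProbabilityTheory.IsMarkovKernel S := by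
    refine ⟨fun y => ⟨?_⟩⟩
    rw [hSB y Set.univ MeasurableSet.univ]
    simp
  -- property (i): equivariance
  have hi : ∀ B : Set X, MeasurableSet B → ∀ (g₀ : G) (y : Y), S (g₀ • y) (g₀ • B) = S y B := by
    intro B hB g₀ y
    have hgB : MeasurableSet (g₀ • B) := by
      have h1 : (fun x : X => g₀⁻¹ • x) ⁻¹' B = g₀ • B := by
        have := Set.preimage_smul (g₀⁻¹ : G) B
        rwa [inv_inv] at this
      rw [← h1]
      exact hsmulXc g₀⁻¹ hB
    rw [hSB _ _ hgB, hSB _ _ hB]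
    have hptwise : ∀ g : G, ρ.condKernel (g • g₀ • y) ((fun x : X => g⁻¹ • x) ⁻¹' (g₀ • B))
        = (fun u : G => ρ.condKernel (u • y) ((fun x : X => u⁻¹ • x) ⁻¹' B)) (g * g₀) := by
      intro g
      have h1 : g • g₀ • y = (g * g₀) • y := smul_smul g g₀ y
      have h2 : (fun x : X => g⁻¹ • x) ⁻¹' (g₀ • B) = (fun x : X => (g * g₀)⁻¹ • x) ⁻¹' B := by
        ext x
        simp only [Set.mem_preimage]
        rw [Set.mem_smul_set_iff_inv_smul_mem, smul_smul, mul_inv_rev]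
      simp only [h1, h2]
    simp_rw [hptwise]
    exact lintegral_mul_right_eq_self (μ := μ)
      (fun u : G => ρ.condKernel (u • y) ((fun x : X => u⁻¹ • x) ⁻¹' B)) g₀
  -- property (ii): concentration on the fiber
  have hii : ∀ y : Y, S y (t ⁻¹' {y}) = 1 := by
    intro y
    have hpre : MeasurableSet (t ⁻¹' {y}) := htc.measurable (measurableSet_singleton y)
    rw [hSB y _ hpre]
    have hone : ∀ᵐ g ∂μ,
        ρ.condKernel (g • y) ((fun x : X => g⁻¹ • x) ⁻¹' (t ⁻¹' {y})) = 1 := by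
      filter_upwards [haeg y] with g hg
      have hset : (fun x : X => g⁻¹ • x) ⁻¹' (t ⁻¹' {y}) = {x : X | t x = g • y} := by
        ext x
        simp only [Set.mem_preimage, Set.mem_singleton_iff, Set.mem_setOf_eq, hequiv]
        exact inv_smul_eq_iff
      rw [hset]
      exact hg
    rw [lintegral_congr_ae hone]
    simp
  -- the marginal property
  have hSQ : ∀ B : Set X, MeasurableSet B → ∫⁻ y, S y B ∂Q = P B := by
    intro B hB
    have hCmeas : ∀ g : G, MeasurableSet ((fun x : X => g⁻¹ • x) ⁻¹' B) :=
      fun g => hsmulXc g⁻¹ hB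
    have hswap : ∫⁻ y, S y B ∂Q
        = ∫⁻ g, ∫⁻ y, ρ.condKernel (g • y) ((fun x : X => g⁻¹ • x) ⁻¹' B) ∂Q ∂μ := by
      have h1 : (fun y => S y B)
          = fun y => ∫⁻ g, ρ.condKernel (g • y) ((fun x : X => g⁻¹ • x) ⁻¹' B) ∂μ :=
        funext fun y => hSB y B hB
      rw [h1]
      refine lintegral_lintegral_swap ?_
      have : (Function.uncurry fun (y : Y) (g : G) =>
          ρ.condKernel (g • y) ((fun x : X => g⁻¹ • x) ⁻¹' B))
          = (fun p : G × Y => F p B) ∘ Prod.swap := by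
        funext p
        simp only [Function.uncurry, Function.comp_apply, Prod.swap]
        rw [hFapp B hB]
      rw [this]
      exact (((Measure.measurable_coe hB).comp hFmeas).comp measurable_swap).aemeasurable
    rw [hswap]
    have hinner : ∀ g : G,
        ∫⁻ y, ρ.condKernel (g • y) ((fun x : X => g⁻¹ • x) ⁻¹' B) ∂Q = P B := by
      intro g
      have hkm : Measurable fun y' : Y => ρ.condKernel y' ((fun x : X => g⁻¹ • x) ⁻¹' B) :=
        ProbabilityTheory.Kernel.measurable_coe _ (hCmeas g)
      have h1 : ∫⁻ y, ρ.condKernel (g • y) ((fun x : X => g⁻¹ • x) ⁻¹' B) ∂Q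
          = ∫⁻ y', ρ.condKernel y' ((fun x : X => g⁻¹ • x) ⁻¹' B)
              ∂(Measure.map (fun y : Y => g • y) Q) := by
        rw [lintegral_map hkm (hsmulYc g)]
      rw [h1, hQinv g]
      have h2 : ∫⁻ y', ρ.condKernel y' ((fun x : X => g⁻¹ • x) ⁻¹' B) ∂Q
          = ρ (Set.univ ×ˢ ((fun x : X => g⁻¹ • x) ⁻¹' B)) := by
        rw [← hfst]
        rw [← Measure.setLIntegral_condKernel_eq_measure_prod MeasurableSet.univ (hCmeas g),
          Measure.restrict_univ]
      rw [h2]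
      have h3 : ρ (Set.univ ×ˢ ((fun x : X => g⁻¹ • x) ⁻¹' B))
          = P ((fun x : X => g⁻¹ • x) ⁻¹' B) := by
        rw [hρdef, Measure.map_apply hpair (MeasurableSet.univ.prod (hCmeas g))]
        congr 1
        ext x
        simp
      rw [h3, ← Measure.map_apply (hsmulXc g⁻¹) hB, hinv g⁻¹]
    simp_rw [hinner]
    simp
  -- conclusion
  refine ⟨S, hSM, hi, hii, ?_⟩
  intro f hf hbd
  obtain ⟨C, hC⟩ := hbd
  have hsnd : (Q.compProd S).snd = P := by
    ext B hB
    rw [Measure.snd_apply hB, Measure.compProd_apply (measurable_snd hB)]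
    exact hSQ B hB
  have hfint : Integrable (fun p : Y × X => f p.2) (Q.compProd S) := by
    constructor
    · exact (hf.comp measurable_snd).aestronglyMeasurable
    · refine HasFiniteIntegral.of_bounded (C := C) ?_
      exact ae_of_all _ fun p => by simpa [Real.norm_eq_abs] using hC p.2
  have h1 : ∫ p : Y × X, f p.2 ∂(Q.compProd S) = ∫ y, ∫ x, f x ∂(S y) ∂Q :=
    Measure.integral_compProd hfint
  have h2 : ∫ p : Y × X, f p.2 ∂(Q.compProd S) = ∫ x, f x ∂((Q.compProd S).snd) := by
    rw [Measure.snd, integral_map measurable_snd.aemeasurable hf.aestronglyMeasurable]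
  rw [← h1, h2, hsnd]
end

section
/- Let G be a compact metrizable topological group acting continuously and transitively on Polish spaces X and Y, let t : X → Y be a continuous surjective equivariant map, fix y₀ ∈ Y and x₀ ∈ X with t(x₀) = y₀, let G₀ = {g ∈ G : g•y₀ = y₀} be the stabilizer of y₀ with Haar probability measure ν on G₀, and let k : Y → G be a Borel measurable map with k(y)•y₀ = y for all y. For Borel B ⊆ X and y ∈ Y define R(B|y) = ν({g₀ ∈ G₀ : k(y)•(g₀•x₀) ∈ B}). Then: (i) R(g•B | g•y) = R(B | y) for all Borel B ⊆ X, g ∈ G, y ∈ Y; and (ii) R(t⁻¹({y}) | y) = 1 for all y ∈ Y. -/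
open MeasureTheory Pointwise

/-- Proposition 3.4.  Let `G` be a compact metrizable topological group
acting continuously and transitively on Polish spaces `X` and `Y`, let `t : X → Y` be a
continuous surjective equivariant map, fix `y₀ ∈ Y` and `x₀ ∈ X` with `t(x₀) = y₀`, let
`G₀ = Stab(y₀)` carry its Haar probability measure `ν`, and let `k : Y → G` be Borel
measurable with `k(y) • y₀ = y` for all `y`.  Define
`R(B|y) = ν {g₀ ∈ G₀ : k(y) • (g₀ • x₀) ∈ B}`.  Then (i) `R(g•B | g•y) = R(B|y)` for all
Borel `B`, `g`, `y`, and (ii) `R(t⁻¹{y} | y) = 1` for all `y`. -/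
theorem kernel_construction_invariant_and_concentrated (G X Y : Type*)
    [TopologicalSpace G] [Group G] [IsTopologicalGroup G] [CompactSpace G]
    [TopologicalSpace.MetrizableSpace G] [MeasurableSpace G] [BorelSpace G]
    [TopologicalSpace X] [PolishSpace X] [MeasurableSpace X] [BorelSpace X]
    [TopologicalSpace Y] [PolishSpace Y] [MeasurableSpace Y] [BorelSpace Y]
    [MulAction G X] [ContinuousSMul G X] [MulAction G Y] [ContinuousSMul G Y]
    (htransX : ∀ x₁ x₂ : X, ∃ g : G, g • x₁ = x₂)
    (htransY : ∀ y₁ y₂ : Y, ∃ g : G, g • y₁ = y₂)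
    (t : X → Y) (htc : Continuous t) (hsurj : Function.Surjective t)
    (hequiv : ∀ (g : G) (x : X), t (g • x) = g • t x)
    (y₀ : Y) (x₀ : X) (hx₀ : t x₀ = y₀)
    (ν : Measure (MulAction.stabilizer G y₀)) (hνprob : IsProbabilityMeasure ν)
    (hνinv : ∀ h : MulAction.stabilizer G y₀,
      Measure.map (fun g : MulAction.stabilizer G y₀ => h * g) ν = ν)
    (k : Y → G) (hk : Measurable k) (hky : ∀ y : Y, k y • y₀ = y) :
    (∀ B : Set X, MeasurableSet B → ∀ (g : G) (y : Y),
        ν {g₀ : MulAction.stabilizer G y₀ | k (g • y) • ((g₀ : G) • x₀) ∈ g • B}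
          = ν {g₀ : MulAction.stabilizer G y₀ | k y • ((g₀ : G) • x₀) ∈ B}) ∧
    (∀ y : Y,
        ν {g₀ : MulAction.stabilizer G y₀ | k y • ((g₀ : G) • x₀) ∈ t ⁻¹' {y}} = 1) := by
  constructor
  · intro B hB g y
    have hmem : (k y)⁻¹ * (g⁻¹ * k (g • y)) ∈ MulAction.stabilizer G y₀ := by
      rw [MulAction.mem_stabilizer_iff]
      have h1 : (g⁻¹ * k (g • y)) • y₀ = y := by
        rw [mul_smul, hky, inv_smul_eq_iff]
      rw [mul_smul, h1, inv_smul_eq_iff, hky]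
    set h : MulAction.stabilizer G y₀ := ⟨_, hmem⟩ with hh
    have hSmeas : MeasurableSet {g₀ : MulAction.stabilizer G y₀ | k y • ((g₀ : G) • x₀) ∈ B} := by
      have hc : Continuous fun a : G => k y • (a • x₀) :=
        continuous_const.smul (continuous_id.smul continuous_const)
      exact (hc.measurable.comp measurable_subtype_coe) hB
    have hset : {g₀ : MulAction.stabilizer G y₀ | k (g • y) • ((g₀ : G) • x₀) ∈ g • B}
        = (fun g₀ => h * g₀) ⁻¹' {g₀ : MulAction.stabilizer G y₀ | k y • ((g₀ : G) • x₀) ∈ B} := by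
      ext g₀
      simp only [Set.mem_setOf_eq, Set.mem_preimage]
      rw [Set.mem_smul_set_iff_inv_smul_mem]
      have : k y • (((h * g₀ : MulAction.stabilizer G y₀) : G) • x₀)
          = g⁻¹ • (k (g • y) • ((g₀ : G) • x₀)) := by
        push_cast [hh]
        rw [smul_smul, smul_smul, smul_smul]
        congr 1
        group
      rw [this]
    have hmul : Measurable fun g₀ : MulAction.stabilizer G y₀ => h * g₀ :=
      (measurable_const.mul measurable_subtype_coe).subtype_mk
    rw [hset]
    conv_rhs => rw [← hνinv h]
    rw [Measure.map_apply hmul hSmeas]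
  · intro y
    have huniv : {g₀ : MulAction.stabilizer G y₀ | k y • ((g₀ : G) • x₀) ∈ t ⁻¹' {y}}
        = Set.univ := by
      ext g₀
      simp only [Set.mem_setOf_eq, Set.mem_preimage, Set.mem_singleton_iff, Set.mem_univ,
        iff_true]
      rw [hequiv, hequiv, hx₀, g₀.2, hky]
    rw [huniv, measure_univ]
end
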